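/- Every nonzero ideal of Z[i] coprime to 2 has a unique generator congruent to 1 modulo (1+i)^3. -/

import Mathlib

private lemma gi_pow : (1 + (⟨0, 1⟩ : GaussianInt)) ^ 3 = ⟨-2, 2⟩ := by decide

private lemma gi_dvd_iff (z : GaussianInt) :
    (1 + (⟨0, 1⟩ : GaussianInt)) ^ 3 ∣ z ↔ 4 ∣ z.re + z.im ∧ 4 ∣ z.im - z.re := by
  rw [gi_pow]
  constructor
  · rintro ⟨w, rfl⟩
    simp only [Zsqrtd.re_mul, Zsqrtd.im_mul]
    exact ⟨⟨-w.im, by ring⟩, ⟨w.re, by ring⟩⟩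
  · rintro ⟨⟨p, hp⟩, ⟨q, hq⟩⟩
    exact ⟨⟨q, -p⟩, by ext <;> simp [Zsqrtd.re_mul, Zsqrtd.im_mul] <;> omega⟩

private lemma gi_key (x y : ℤ) (h : ¬ (2 ∣ (x+y))) :
    (4 ∣ x - 1 + y ∧ 4 ∣ y - (x-1)) ∨ (4 ∣ -x-1-y ∧ 4 ∣ -y-(-x-1)) ∨
    (4 ∣ -y-1+x ∧ 4 ∣ x-(-y-1)) ∨ (4 ∣ y-1-x ∧ 4 ∣ -x-(y-1)) := by omega

/-- Every nonzero ideal of `ℤ[i]` coprime to `2` has a unique generator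
congruent to `1` modulo `(1+i)^3`. -/
theorem stmt_2 (I : Ideal GaussianInt) (hI : I ≠ ⊥)
    (hcop : IsCoprime I (Ideal.span {2})) :
    ∃! g : GaussianInt,
      Ideal.span {g} = I ∧ (1 + (⟨0, 1⟩ : GaussianInt)) ^ 3 ∣ g - 1 := by
  obtain ⟨a, rfl⟩ := (IsPrincipalIdealRing.principal I).principal
  rw [Ideal.submodule_span_eq] at *
  rw [Ideal.isCoprime_span_singleton_iff] at hcop
  -- a has odd coordinate sum
  have hodd : ¬ (2 ∣ (a.re + a.im)) := by
    rintro ⟨k, hk⟩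
    have hdvd : (⟨1, 1⟩ : GaussianInt) ∣ a :=
      ⟨⟨k, a.im - k⟩, by ext <;> simp [Zsqrtd.re_mul, Zsqrtd.im_mul] <;> omega⟩
    have hdvd2 : (⟨1, 1⟩ : GaussianInt) ∣ 2 := ⟨⟨1, -1⟩, by decide⟩
    have := hcop.isUnit_of_dvd' hdvd hdvd2
    rw [← Zsqrtd.norm_eq_one_iff] at this
    revert this; decide
  -- helper for existence cases
  have mkg : ∀ u : GaussianInt, IsUnit u →
      4 ∣ (u*a).re - 1 + (u*a).im → 4 ∣ (u*a).im - ((u*a).re - 1) →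
      Ideal.span {u*a} = Ideal.span {a} ∧
        (1 + (⟨0, 1⟩ : GaussianInt)) ^ 3 ∣ u*a - 1 := by
    intro u hu h1 h2
    constructor
    · exact Ideal.span_singleton_eq_span_singleton.mpr (associated_unit_mul_left a u hu)
    · rw [gi_dvd_iff]
      constructor <;> simp only [Zsqrtd.re_sub, Zsqrtd.im_sub, Zsqrtd.re_one, Zsqrtd.im_one] <;>
        omega
  -- existence of a good generator
  have hex : ∃ g : GaussianInt, Ideal.span {g} = Ideal.span {a} ∧
      (1 + (⟨0, 1⟩ : GaussianInt)) ^ 3 ∣ g - 1 := by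
    rcases gi_key a.re a.im hodd with ⟨h1, h2⟩ | ⟨h1, h2⟩ | ⟨h1, h2⟩ | ⟨h1, h2⟩
    · exact ⟨1 * a, mkg 1 isUnit_one (by simpa using by omega) (by simpa using by omega)⟩
    · refine ⟨(-1) * a, mkg (-1) (IsUnit.neg isUnit_one) ?_ ?_⟩ <;>
        simp [Zsqrtd.re_mul, Zsqrtd.im_mul] <;> omega
    · refine ⟨(⟨0,1⟩ : GaussianInt) * a,
        mkg ⟨0,1⟩ (IsUnit.of_mul_eq_one ⟨0,-1⟩ (by decide)) ?_ ?_⟩ <;>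
        simp [Zsqrtd.re_mul, Zsqrtd.im_mul] <;> omega
    · refine ⟨(⟨0,-1⟩ : GaussianInt) * a,
        mkg ⟨0,-1⟩ (IsUnit.of_mul_eq_one ⟨0,1⟩ (by decide)) ?_ ?_⟩ <;>
        simp [Zsqrtd.re_mul, Zsqrtd.im_mul] <;> omega
  obtain ⟨g0, hg0span, hg0dvd⟩ := hex
  refine ⟨g0, ⟨hg0span, hg0dvd⟩, ?_⟩
  rintro g ⟨hgspan, hgdvd⟩
  -- g and g0 are associated
  have hassoc : Associated g g0 :=
    Ideal.span_singleton_eq_span_singleton.mp (hgspan.trans hg0span.symm)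
  obtain ⟨u, hu⟩ := hassoc
  have hnorm : ((u : GaussianInt)).norm = 1 :=
    (Zsqrtd.norm_eq_one_iff' (by norm_num) _).mpr u.isUnit
  simp only [Zsqrtd.norm_def] at hnorm
  set c := (u : GaussianInt).re with hc
  set d := (u : GaussianInt).im with hd
  have hre : g0.re = g.re * c - g.im * d := by
    have := congrArg Zsqrtd.re hu
    simp [Zsqrtd.re_mul, ← hc, ← hd] at this
    omega
  have him : g0.im = g.re * d + g.im * c := by
    have := congrArg Zsqrtd.im hu
    simp [Zsqrtd.im_mul, ← hc, ← hd] at this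
    omega
  rw [gi_dvd_iff] at hgdvd hg0dvd
  simp only [Zsqrtd.re_sub, Zsqrtd.im_sub, Zsqrtd.re_one, Zsqrtd.im_one] at hgdvd hg0dvd
  obtain ⟨h1, h2⟩ := hgdvd
  obtain ⟨h3, h4⟩ := hg0dvd
  have hcb : -1 ≤ c ∧ c ≤ 1 := by constructor <;> nlinarith [sq_nonneg d, sq_nonneg (c+1), sq_nonneg (c-1)]
  have hdb : -1 ≤ d ∧ d ≤ 1 := by constructor <;> nlinarith [sq_nonneg c, sq_nonneg (d+1), sq_nonneg (d-1)]
  obtain ⟨hc1, hc2⟩ := hcb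
  obtain ⟨hd1, hd2⟩ := hdb
  interval_cases c <;> interval_cases d <;> (try ext) <;> omega
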